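/- Let E be a row-finite directed graph with no sources and no return paths (no cycles). Then the graph groupoid G_E has dynamic asymptotic dimension 0: every open precompact symmetric subset K of G_E generates a precompact subgroupoid of G_E. -/

import Mathlib

/-- A directed graph with vertex set `V`, edge set `E`, and range and source maps. -/
structure DirGraph where
  V : Type
  E : Type
  r : E → V
  s : E → V

namespace DirGraph

variable (g : DirGraph)

/-- An infinite path `x₁ x₂ ⋯` in the graph: `s(x_i) = r(x_{i+1})`. -/
def InfPath : Type := {x : ℕ → g.E // ∀ i, g.s (x i) = g.r (x (i + 1))}

/-- The graph groupoid `G_E = {(x, k, y) : x ∼_k y}`, where `x ∼_k y` means that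
`x_i = y_{i+k}` eventually; we encode this by `∃ m n, k = n − m ∧ ∀ i, x_{m+i} = y_{n+i}`. -/
def GraphGroupoid : Type :=
  {p : g.InfPath × ℤ × g.InfPath //
    ∃ m n : ℕ, p.2.1 = (n : ℤ) - (m : ℤ) ∧ ∀ i : ℕ, p.1.val (m + i) = p.2.2.val (n + i)}

/-- Inversion in the graph groupoid: `(x, k, y)⁻¹ = (y, −k, x)`. -/
def ginv (p : g.GraphGroupoid) : g.GraphGroupoid :=
  ⟨(p.val.2.2, -p.val.2.1, p.val.1), by
    obtain ⟨m, n, hk, h⟩ := p.property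
    exact ⟨n, m, by rw [hk]; ring, fun i => (h i).symm⟩⟩

/-- Composition in the graph groupoid: `(x, k, y)(y, l, z) = (x, k + l, z)`. -/
def gmul (p q : g.GraphGroupoid) (hpq : p.val.2.2 = q.val.1) : g.GraphGroupoid :=
  ⟨(p.val.1, p.val.2.1 + q.val.2.1, q.val.2.2), by
    obtain ⟨m, n, hk, h⟩ := p.property
    obtain ⟨m', n', hk', h'⟩ := q.property
    refine ⟨m + m', n' + n, by rw [hk, hk']; push_cast; ring, fun i => ?_⟩
    calc p.val.1.val (m + m' + i) = p.val.1.val (m + (m' + i)) := by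
              rw [Nat.add_assoc]
      _ = p.val.2.2.val (n + (m' + i)) := h (m' + i)
      _ = q.val.1.val (m' + (n + i)) := by
              rw [hpq, show n + (m' + i) = m' + (n + i) by omega]
      _ = q.val.2.2.val (n' + (n + i)) := h' (n + i)
      _ = q.val.2.2.val (n' + n + i) := by rw [Nat.add_assoc]⟩

/-- A finite path `μ₁ ⋯ μ_len` with `s(μ_i) = r(μ_{i+1})`. -/
structure FinPath where
  len : ℕ
  edges : Fin len → g.E
  compat : ∀ (i : ℕ) (h : i + 1 < len),
    g.s (edges ⟨i, by omega⟩) = g.r (edges ⟨i + 1, h⟩)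

/-- The basic (compact open) set `Z(μ, ν)` of the graph groupoid: triples `(x, k, y)`
with `x ∈ Z(μ)`, `y ∈ Z(ν)`, `k = |ν| − |μ|`, and `x_{|μ|+i} = y_{|ν|+i}` for all `i`. -/
def Z (μ ν : g.FinPath) : Set g.GraphGroupoid :=
  {p | p.val.2.1 = (ν.len : ℤ) - (μ.len : ℤ) ∧
    (∀ i : Fin μ.len, p.val.1.val i = μ.edges i) ∧
    (∀ i : Fin ν.len, p.val.2.2.val i = ν.edges i) ∧
    ∀ i : ℕ, p.val.1.val (μ.len + i) = p.val.2.2.val (ν.len + i)}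

/-- The topology on the graph groupoid, generated by the basic sets `Z(μ, ν)`. -/
instance : TopologicalSpace g.GraphGroupoid :=
  TopologicalSpace.generateFrom {S | ∃ μ ν : g.FinPath, S = g.Z μ ν}

/-- A subset of the graph groupoid closed under inversion and composition. -/
def IsSubgroupoid (S : Set g.GraphGroupoid) : Prop :=
  (∀ p ∈ S, g.ginv p ∈ S) ∧
    ∀ p ∈ S, ∀ q ∈ S, ∀ hpq : p.val.2.2 = q.val.1, g.gmul p q hpq ∈ S

/-- The subgroupoid of the graph groupoid generated by a subset. -/
def gen (K : Set g.GraphGroupoid) : Set g.GraphGroupoid :=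
  ⋂₀ {S | K ⊆ S ∧ g.IsSubgroupoid S}

end DirGraph

namespace DirGraph

variable {g : DirGraph}

/-- Membership in `Z` only depends on the underlying value. -/
lemma mem_Z_of_val_eq {μ ν : g.FinPath} {p q : g.GraphGroupoid} (h : p.val = q.val)
    (hp : p ∈ g.Z μ ν) : q ∈ g.Z μ ν := by
  simp only [Z, Set.mem_setOf_eq] at hp ⊢
  rw [← h]; exact hp

lemma ginv_mem_Z {μ ν : g.FinPath} {p : g.GraphGroupoid} (hp : p ∈ g.Z μ ν) :
    g.ginv p ∈ g.Z ν μ := by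
  obtain ⟨hk, hx, hy, ht⟩ := hp
  exact ⟨by simp [ginv, hk, neg_sub], hy, hx, fun i => (ht i).symm⟩

/-- The finite path given by the first `L` edges of an infinite path. -/
def prefixPath (x : g.InfPath) (L : ℕ) : g.FinPath where
  len := L
  edges := fun i => x.val i
  compat := fun i _ => x.property i

@[simp] lemma prefixPath_len (x : g.InfPath) (L : ℕ) : (g.prefixPath x L).len = L := rfl

/-- Every element of the graph groupoid lies in a basic set with paths of positive length. -/
lemma exists_mem_Z (p : g.GraphGroupoid) :
    ∃ μ ν : g.FinPath, 0 < μ.len ∧ 0 < ν.len ∧ p ∈ g.Z μ ν := by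
  obtain ⟨m, n, hk, h⟩ := p.property
  refine ⟨prefixPath p.val.1 (m + 1), prefixPath p.val.2.2 (n + 1), Nat.succ_pos _,
    Nat.succ_pos _, ?_, fun i => rfl, fun i => rfl, fun i => ?_⟩
  · show p.val.2.1 = ((n + 1 : ℕ) : ℤ) - ((m + 1 : ℕ) : ℤ)
    rw [hk]; push_cast; ring
  · show p.val.1.val (m + 1 + i) = p.val.2.2.val (n + 1 + i)
    have := h (1 + i)
    rwa [← Nat.add_assoc, ← Nat.add_assoc] at this

lemma Z_isOpen (μ ν : g.FinPath) : IsOpen (g.Z μ ν) :=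
  TopologicalSpace.isOpen_generateFrom_of_mem ⟨μ, ν, rfl⟩

end DirGraph

namespace DirGraph

variable {g : DirGraph}

lemma mem_Z_prefix (p : g.GraphGroupoid) {m n : ℕ} (hk : p.val.2.1 = (n : ℤ) - (m : ℤ))
    (h : ∀ i, p.val.1.val (m + i) = p.val.2.2.val (n + i)) (c : ℕ) :
    p ∈ g.Z (g.prefixPath p.val.1 (m + c)) (g.prefixPath p.val.2.2 (n + c)) := by
  refine ⟨?_, fun i => rfl, fun i => rfl, fun i => ?_⟩
  · show p.val.2.1 = ((n + c : ℕ) : ℤ) - ((m + c : ℕ) : ℤ)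
    rw [hk]; push_cast; ring
  · show p.val.1.val (m + c + i) = p.val.2.2.val (n + c + i)
    have := h (c + i); rwa [← Nat.add_assoc, ← Nat.add_assoc] at this

lemma Z_isClosed (μ ν : g.FinPath) : IsClosed (g.Z μ ν) := by
  rw [← isOpen_compl_iff, isOpen_iff_forall_mem_open]
  intro p hp
  obtain ⟨m₀, n₀, hk₀, h₀⟩ := p.property
  by_cases hk : p.val.2.1 = (ν.len : ℤ) - (μ.len : ℤ)
  · -- some matching condition fails
    by_cases hB : ∀ i : Fin μ.len, p.val.1.val i = μ.edges i
    · by_cases hC : ∀ i : Fin ν.len, p.val.2.2.val i = ν.edges i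
      · -- the tail condition must fail
        have hD : ¬ ∀ i : ℕ, p.val.1.val (μ.len + i) = p.val.2.2.val (ν.len + i) := by
          intro hD; exact hp ⟨hk, hB, hC, hD⟩
        push_neg at hD
        obtain ⟨j, hj⟩ := hD
        set c := μ.len + ν.len + j + 1 with hc
        refine ⟨g.Z (g.prefixPath p.val.1 (m₀ + c)) (g.prefixPath p.val.2.2 (n₀ + c)),
          ?_, g.Z_isOpen _ _, mem_Z_prefix p hk₀ h₀ c⟩
        intro q ⟨_, hx, hy, _⟩ ⟨_, _, _, ht'⟩
        have e1 : q.val.1.val (μ.len + j) = p.val.1.val (μ.len + j) :=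
          hx ⟨μ.len + j, by simp only [prefixPath_len]; omega⟩
        have e2 : q.val.2.2.val (ν.len + j) = p.val.2.2.val (ν.len + j) :=
          hy ⟨ν.len + j, by simp only [prefixPath_len]; omega⟩
        exact hj (by rw [← e1, ← e2]; exact ht' j)
      · push_neg at hC
        obtain ⟨i, hi⟩ := hC
        set c := μ.len + ν.len + 1 with hc
        refine ⟨g.Z (g.prefixPath p.val.1 (m₀ + c)) (g.prefixPath p.val.2.2 (n₀ + c)),
          ?_, g.Z_isOpen _ _, mem_Z_prefix p hk₀ h₀ c⟩
        intro q ⟨_, _, hy, _⟩ ⟨_, _, hy', _⟩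
        have e1 : q.val.2.2.val i = p.val.2.2.val i := hy ⟨i, by simp only [prefixPath_len]; omega⟩
        exact hi (by rw [← e1]; exact hy' i)
    · push_neg at hB
      obtain ⟨i, hi⟩ := hB
      set c := μ.len + ν.len + 1 with hc
      refine ⟨g.Z (g.prefixPath p.val.1 (m₀ + c)) (g.prefixPath p.val.2.2 (n₀ + c)),
        ?_, g.Z_isOpen _ _, mem_Z_prefix p hk₀ h₀ c⟩
      intro q ⟨_, hx, _, _⟩ ⟨_, hx', _, _⟩
      have e1 : q.val.1.val i = p.val.1.val i := hx ⟨i, by simp only [prefixPath_len]; omega⟩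
      exact hi (by rw [← e1]; exact hx' i)
  · refine ⟨g.Z (g.prefixPath p.val.1 (m₀ + 0)) (g.prefixPath p.val.2.2 (n₀ + 0)),
      ?_, g.Z_isOpen _ _, mem_Z_prefix p hk₀ h₀ 0⟩
    intro q ⟨hk', _, _, _⟩ ⟨hk'', _, _, _⟩
    apply hk
    simp only [prefixPath_len] at hk'
    have : ((n₀ + 0 : ℕ) : ℤ) - ((m₀ + 0 : ℕ) : ℤ) = (n₀ : ℤ) - m₀ := by push_cast; ring
    rw [hk₀, ← this, ← hk', hk'']

end DirGraph

namespace DirGraph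

variable {g : DirGraph}

/-- Concatenation of a finite path with an infinite sequence of edges. -/
def cat (μ : g.FinPath) (f : ℕ → g.E) : ℕ → g.E :=
  fun i => if h : i < μ.len then μ.edges ⟨i, h⟩ else f (i - μ.len)

lemma cat_lt {μ : g.FinPath} {f : ℕ → g.E} {i : ℕ} (h : i < μ.len) :
    g.cat μ f i = μ.edges ⟨i, h⟩ := dif_pos h

lemma cat_ge {μ : g.FinPath} {f : ℕ → g.E} {i : ℕ} (h : μ.len ≤ i) :
    g.cat μ f i = f (i - μ.len) := dif_neg (by omega)

lemma cat_add {μ : g.FinPath} {f : ℕ → g.E} (i : ℕ) :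
    g.cat μ f (μ.len + i) = f i := by
  rw [cat_ge (by omega)]
  congr 1; omega

lemma cat_infpath (μ : g.FinPath) (f : ℕ → g.E)
    (hf : ∀ i, g.s (f i) = g.r (f (i + 1)))
    (hb : ∀ h : 0 < μ.len, g.s (μ.edges ⟨μ.len - 1, Nat.sub_lt h Nat.one_pos⟩) = g.r (f 0)) :
    ∀ i, g.s (g.cat μ f i) = g.r (g.cat μ f (i + 1)) := by
  intro i
  rcases lt_trichotomy (i + 1) μ.len with h | h | h
  · rw [cat_lt (show i < μ.len by omega), cat_lt h]
    exact μ.compat i h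
  · have hi : i < μ.len := by omega
    have h0 : 0 < μ.len := by omega
    rw [cat_lt hi, cat_ge (by omega), show i + 1 - μ.len = 0 by omega,
      show (⟨i, hi⟩ : Fin μ.len) = ⟨μ.len - 1, by omega⟩ from Fin.ext (show i = μ.len - 1 by omega), hb h0]
  · rw [cat_ge (show μ.len ≤ i by omega), cat_ge (by omega)]
    have : i + 1 - μ.len = (i - μ.len) + 1 := by omega
    rw [this]; exact hf _

/-- The iterated "edges reachable from `v` at depth `n`" sets. -/
def Sv (v : g.V) : ℕ → Set g.E
  | 0 => {e | g.r e = v}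
  | n + 1 => {e | ∃ e' ∈ Sv v n, g.r e = g.s e'}

lemma Sv_finite (hrow : ∀ v : g.V, {e | g.r e = v}.Finite) (v : g.V) :
    ∀ n, (g.Sv v n).Finite
  | 0 => hrow v
  | n + 1 => by
      have : g.Sv v (n + 1) = ⋃ e' ∈ g.Sv v n, {e | g.r e = g.s e'} := by
        ext e; simp [Sv]
      rw [this]
      exact (Sv_finite hrow v n).biUnion fun e' _ => hrow (g.s e')

lemma Z_isCompact (hrow : ∀ v : g.V, {e | g.r e = v}.Finite) (μ ν : g.FinPath)
    (hμ : 0 < μ.len) (hν : 0 < ν.len) : IsCompact (g.Z μ ν) := by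
  rcases Set.eq_empty_or_nonempty (g.Z μ ν) with he | ⟨p₀, hp₀⟩
  · rw [he]; exact isCompact_empty
  -- the common source vertex of μ and ν
  set v := g.s (μ.edges ⟨μ.len - 1, by omega⟩) with hv
  have hvν : g.s (ν.edges ⟨ν.len - 1, by omega⟩) = v := by
    obtain ⟨hk, hx, hy, ht⟩ := hp₀
    have e1 : g.s (μ.edges ⟨μ.len - 1, by omega⟩) = g.s (p₀.val.1.val (μ.len - 1)) := by
      rw [hx ⟨μ.len - 1, by omega⟩]
    have e2 : g.s (p₀.val.1.val (μ.len - 1)) = g.r (p₀.val.1.val (μ.len)) := by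
      have := p₀.val.1.property (μ.len - 1)
      rwa [show μ.len - 1 + 1 = μ.len by omega] at this
    have e3 : p₀.val.1.val μ.len = p₀.val.2.2.val ν.len := by
      have := ht 0; simpa using this
    have e4 : g.r (p₀.val.2.2.val ν.len) = g.s (p₀.val.2.2.val (ν.len - 1)) := by
      have := p₀.val.2.2.property (ν.len - 1)
      rw [show ν.len - 1 + 1 = ν.len by omega] at this
      exact this.symm
    have e5 : g.s (p₀.val.2.2.val (ν.len - 1)) = g.s (ν.edges ⟨ν.len - 1, by omega⟩) := by
      rw [hy ⟨ν.len - 1, by omega⟩]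
    rw [hv, e1, e2, e3, e4, e5]
  letI : TopologicalSpace g.E := ⊥
  haveI : DiscreteTopology g.E := ⟨rfl⟩
  haveI : ∀ n, CompactSpace ↥(g.Sv v n) := fun n => by
    haveI := (g.Sv_finite hrow v n).to_subtype
    infer_instance
  set TS : Set (∀ n, ↥(g.Sv v n)) :=
    {f | ∀ i, g.s (f i).val = g.r (f (i + 1)).val} with hTS
  have hTSclosed : IsClosed TS := by
    have : TS = ⋂ i, (fun f : ∀ n, ↥(g.Sv v n) => (f i, f (i + 1))) ⁻¹'
        {q : ↥(g.Sv v i) × ↥(g.Sv v (i + 1)) | g.s q.1.val = g.r q.2.val} := by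
      ext f; simp [hTS]
    rw [this]
    exact isClosed_iInter fun i =>
      (isClosed_discrete _).preimage ((continuous_apply i).prodMk (continuous_apply (i + 1)))
  haveI : CompactSpace ↥TS := isCompact_iff_compactSpace.mp hTSclosed.isCompact
  -- the parametrization of Z(μ, ν)
  have hr0 : ∀ f : ↥TS, g.r ((f.val 0).val) = v := fun f => (f.val 0).property
  have hbμ : ∀ f : ↥TS, ∀ _ : 0 < μ.len,
      g.s (μ.edges ⟨μ.len - 1, by omega⟩) = g.r ((f.val 0).val) := fun f _ => (hr0 f).symm
  have hbν : ∀ f : ↥TS, ∀ _ : 0 < ν.len,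
      g.s (ν.edges ⟨ν.len - 1, by omega⟩) = g.r ((f.val 0).val) := fun f _ => by
    rw [hvν, hr0 f]
  let φ : ↥TS → g.GraphGroupoid := fun f =>
    ⟨(⟨g.cat μ (fun i => (f.val i).val), g.cat_infpath μ _ (fun i => f.property i) (hbμ f)⟩,
      (ν.len : ℤ) - (μ.len : ℤ),
      ⟨g.cat ν (fun i => (f.val i).val), g.cat_infpath ν _ (fun i => f.property i) (hbν f)⟩),
      ⟨μ.len, ν.len, rfl, fun i => by simp only [cat_add]⟩⟩
  have hφcont : Continuous φ := by
    rw [continuous_generateFrom_iff]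
    rintro s ⟨α, β, rfl⟩
    by_cases hlen : α.len + ν.len = β.len + μ.len
    · rw [isOpen_iff_forall_mem_open]
      intro f hf
      obtain ⟨hk, hx, hy, ht⟩ := hf
      set M := α.len + β.len + μ.len + ν.len with hM
      refine ⟨{f' : ↥TS | ∀ i < M, f'.val i = f.val i}, ?_, ?_, fun i _ => rfl⟩
      · intro f' hf'
        have hagree : ∀ j, j < M → (f'.val j).val = (f.val j).val := fun j hj => by
          rw [hf' j hj]
        have hμagree : ∀ j < μ.len + M,
            g.cat μ (fun i => (f'.val i).val) j = g.cat μ (fun i => (f.val i).val) j := by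
          intro j hj
          rcases lt_or_ge j μ.len with h | h
          · rw [cat_lt h, cat_lt h]
          · rw [cat_ge h, cat_ge h, hagree _ (by omega)]
        have hνagree : ∀ j < ν.len + M,
            g.cat ν (fun i => (f'.val i).val) j = g.cat ν (fun i => (f.val i).val) j := by
          intro j hj
          rcases lt_or_ge j ν.len with h | h
          · rw [cat_lt h, cat_lt h]
          · rw [cat_ge h, cat_ge h, hagree _ (by omega)]
        refine ⟨hk, fun i => ?_, fun i => ?_, fun j => ?_⟩
        · show g.cat μ (fun i => (f'.val i).val) i = α.edges i
          rw [hμagree i (by have := i.isLt; omega)]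
          exact hx i
        · show g.cat ν (fun i => (f'.val i).val) i = β.edges i
          rw [hνagree i (by have := i.isLt; omega)]
          exact hy i
        · show g.cat μ (fun i => (f'.val i).val) (α.len + j)
            = g.cat ν (fun i => (f'.val i).val) (β.len + j)
          rcases lt_or_ge (α.len + j) μ.len with h | h
          · rw [hμagree _ (by omega), hνagree _ (by omega)]
            exact ht j
          · have h' : ν.len ≤ β.len + j := by omega
            have hidx : α.len + j - μ.len = β.len + j - ν.len := by omega
            rw [cat_ge h, cat_ge h', hidx]
      · -- the cylinder is open
        have : {f' : ↥TS | ∀ i < M, f'.val i = f.val i}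
            = ⋂ i ∈ Finset.range M, (fun f' : ↥TS => f'.val i) ⁻¹' {f.val i} := by
          ext f'; simp
        rw [this]
        refine isOpen_biInter_finset fun i _ => ?_
        exact (isOpen_discrete _).preimage ((continuous_apply i).comp continuous_subtype_val)
    · have : φ ⁻¹' g.Z α β = ∅ := by
        ext f
        simp only [Set.mem_preimage, Set.mem_empty_iff_false, iff_false]
        intro hf
        obtain ⟨hk, _, _, _⟩ := hf
        have : (ν.len : ℤ) - (μ.len : ℤ) = (β.len : ℤ) - (α.len : ℤ) := hk
        omega
      rw [this]; exact isOpen_empty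
  have hrange : Set.range φ = g.Z μ ν := by
    apply Set.Subset.antisymm
    · rintro _ ⟨f, rfl⟩
      refine ⟨rfl, fun i => ?_, fun i => ?_, fun i => ?_⟩
      · show g.cat μ (fun n => (f.val n).val) i.val = μ.edges i
        exact cat_lt i.isLt
      · show g.cat ν (fun n => (f.val n).val) i.val = ν.edges i
        exact cat_lt i.isLt
      · show g.cat μ (fun n => (f.val n).val) (μ.len + i)
          = g.cat ν (fun n => (f.val n).val) (ν.len + i)
        simp only [cat_add]
    · intro p hp
      obtain ⟨hk, hx, hy, ht⟩ := hp
      have hmem : ∀ n, p.val.1.val (μ.len + n) ∈ g.Sv v n := by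
        intro n
        induction n with
        | zero =>
          show g.r (p.val.1.val (μ.len + 0)) = v
          have e2 : g.s (p.val.1.val (μ.len - 1)) = g.r (p.val.1.val μ.len) := by
            have := p.val.1.property (μ.len - 1)
            rwa [show μ.len - 1 + 1 = μ.len by omega] at this
          rw [show μ.len + 0 = μ.len from rfl, ← e2, hx ⟨μ.len - 1, by omega⟩]
        | succ n ih =>
          refine ⟨p.val.1.val (μ.len + n), ih, ?_⟩
          have := p.val.1.property (μ.len + n)
          rw [show μ.len + n + 1 = μ.len + (n + 1) by omega] at this
          exact this.symm
      set w : ∀ n, ↥(g.Sv v n) := fun n => ⟨p.val.1.val (μ.len + n), hmem n⟩ with hw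
      have hwTS : w ∈ TS := by
        intro i
        show g.s (p.val.1.val (μ.len + i)) = g.r (p.val.1.val (μ.len + (i + 1)))
        have := p.val.1.property (μ.len + i)
        rwa [show μ.len + i + 1 = μ.len + (i + 1) by omega] at this
      refine ⟨⟨w, hwTS⟩, ?_⟩
      apply Subtype.ext
      refine Prod.ext ?_ (Prod.ext ?_ ?_)
      · apply Subtype.ext
        funext i
        show g.cat μ (fun n => p.val.1.val (μ.len + n)) i = p.val.1.val i
        rcases lt_or_ge i μ.len with h | h
        · rw [cat_lt h, ← hx ⟨i, h⟩]
        · rw [cat_ge h, show μ.len + (i - μ.len) = i by omega]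
      · exact hk.symm
      · apply Subtype.ext
        funext i
        show g.cat ν (fun n => p.val.1.val (μ.len + n)) i = p.val.2.2.val i
        rcases lt_or_ge i ν.len with h | h
        · rw [cat_lt h, ← hy ⟨i, h⟩]
        · rw [cat_ge h]
          have := ht (i - ν.len)
          rw [show ν.len + (i - ν.len) = i by omega] at this
          exact this
  rw [← hrange]
  exact isCompact_range hφcont

end DirGraph

namespace DirGraph

variable {g : DirGraph}

lemma gmul_mem_Z {α β α' β' : g.FinPath} {p q : g.GraphGroupoid}
    (hp : p ∈ g.Z α β) (hq : q ∈ g.Z α' β') (hpq : p.val.2.2 = q.val.1)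
    (hle : β.len ≤ α'.len) (hα : 0 < α.len) :
    ∃ γ : g.FinPath, 0 < γ.len ∧
      (∀ i : Fin γ.len, γ.edges i ∈ Set.range α.edges ∪ Set.range α'.edges) ∧
      g.gmul p q hpq ∈ g.Z γ β' := by
  obtain ⟨hk, hx, hy, htl⟩ := hp
  obtain ⟨hk', hx', hy', htl'⟩ := hq
  set L := α.len + (α'.len - β.len) with hL
  refine ⟨g.prefixPath p.val.1 L, by simp only [prefixPath_len]; omega, fun i => ?_, ?_, ?_, ?_, ?_⟩
  · -- edges of the prefix path lie in the ranges
    have hiL : (i : ℕ) < L := by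
      have := i.isLt; simpa only [prefixPath_len] using this
    rcases lt_or_ge (i : ℕ) α.len with h | h
    · left
      rw [show (g.prefixPath p.val.1 L).edges i = p.val.1.val i from rfl, hx ⟨i, h⟩]
      exact ⟨⟨i, h⟩, rfl⟩
    · right
      have hb : β.len + ((i : ℕ) - α.len) < α'.len := by omega
      have e1 : p.val.1.val i = p.val.1.val (α.len + ((i : ℕ) - α.len)) := by
        rw [show α.len + ((i : ℕ) - α.len) = (i : ℕ) by omega]
      have e2 : p.val.1.val (α.len + ((i : ℕ) - α.len))
          = p.val.2.2.val (β.len + ((i : ℕ) - α.len)) := htl _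
      have e3 : p.val.2.2.val (β.len + ((i : ℕ) - α.len))
          = q.val.1.val (β.len + ((i : ℕ) - α.len)) := by rw [hpq]
      have e4 : q.val.1.val (β.len + ((i : ℕ) - α.len)) = α'.edges ⟨_, hb⟩ := hx' ⟨_, hb⟩
      rw [show (g.prefixPath p.val.1 L).edges i = p.val.1.val i from rfl, e1, e2, e3, e4]
      exact ⟨⟨_, hb⟩, rfl⟩
  · -- the integer component
    show p.val.2.1 + q.val.2.1 = (β'.len : ℤ) - ((g.prefixPath p.val.1 L).len : ℤ)
    rw [hk, hk']
    simp only [prefixPath_len]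
    omega
  · -- prefix of the first path
    intro i
    rfl
  · -- prefix of the second path
    exact hy'
  · -- the tails agree
    intro i
    show p.val.1.val ((g.prefixPath p.val.1 L).len + i) = q.val.2.2.val (β'.len + i)
    simp only [prefixPath_len]
    have e1 : p.val.1.val (L + i) = p.val.1.val (α.len + ((α'.len - β.len) + i)) := by
      rw [show α.len + ((α'.len - β.len) + i) = L + i by omega]
    have e2 : p.val.1.val (α.len + ((α'.len - β.len) + i))
        = p.val.2.2.val (β.len + ((α'.len - β.len) + i)) := htl _
    have e3 : p.val.2.2.val (β.len + ((α'.len - β.len) + i))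
        = q.val.1.val (α'.len + i) := by
      rw [hpq, show β.len + ((α'.len - β.len) + i) = α'.len + i by omega]
    rw [e1, e2, e3, htl' i]

/-- The edges along a finite path are pairwise distinct (no-return-path hypothesis). -/
lemma edges_injective
    (hnoreturn : ∀ (μ : g.FinPath) (h : 0 < μ.len),
      g.r (μ.edges ⟨0, h⟩) ≠ g.s (μ.edges ⟨μ.len - 1, Nat.sub_lt h Nat.one_pos⟩))
    (π : g.FinPath) : Function.Injective π.edges := by
  have key : ∀ a b : Fin π.len, (a : ℕ) < (b : ℕ) → π.edges a ≠ π.edges b := by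
    intro a b hab hedge
    set ρ : g.FinPath :=
      { len := (b : ℕ) - (a : ℕ)
        edges := fun j => π.edges ⟨(a : ℕ) + 1 + (j : ℕ), by
          have := j.isLt; have := b.isLt; omega⟩
        compat := by
          intro i h
          have hib : (a : ℕ) + 1 + i + 1 < π.len := by have := b.isLt; omega
          have := π.compat ((a : ℕ) + 1 + i) hib
          rw [this]
          congr 1 } with hρ
    have hρpos : 0 < ρ.len := by show 0 < (b : ℕ) - (a : ℕ); omega
    apply hnoreturn ρ hρpos
    have hlast : ρ.edges ⟨ρ.len - 1, by omega⟩ = π.edges b := by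
      show π.edges ⟨(a : ℕ) + 1 + (((b : ℕ) - (a : ℕ)) - 1), _⟩ = π.edges b
      congr 1
      all_goals exact Fin.ext (by show (a : ℕ) + 1 + (((b : ℕ) - (a : ℕ)) - 1) = (b : ℕ); omega)
    have hfirst : ρ.edges ⟨0, hρpos⟩ = π.edges ⟨(a : ℕ) + 1, by have := b.isLt; omega⟩ := by
      show π.edges ⟨(a : ℕ) + 1 + 0, _⟩ = _
      congr 1
    rw [hlast, hfirst, ← hedge]
    have := π.compat (a : ℕ) (by have := b.isLt; omega)
    rw [show (⟨(a : ℕ), by omega⟩ : Fin π.len) = a from Fin.ext rfl] at this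
    exact this.symm
  intro a b hab
  by_contra hne
  rcases lt_trichotomy ((a : ℕ)) ((b : ℕ)) with h | h | h
  · exact key a b h hab
  · exact hne (Fin.ext h)
  · exact key b a h hab.symm

/-- Extensionality for finite paths. -/
lemma FinPath.ext' {π₁ π₂ : g.FinPath} (hlen : π₁.len = π₂.len)
    (hedges : ∀ (i : ℕ) (h1 : i < π₁.len) (h2 : i < π₂.len),
      π₁.edges ⟨i, h1⟩ = π₂.edges ⟨i, h2⟩) : π₁ = π₂ := by
  obtain ⟨l₁, e₁, c₁⟩ := π₁
  obtain ⟨l₂, e₂, c₂⟩ := π₂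
  dsimp at hlen hedges
  subst hlen
  have : e₁ = e₂ := funext fun i => by
    have := hedges i i.isLt i.isLt
    simpa using this
  subst this
  rfl

/-- There are only finitely many paths of positive length with edges in a finite set. -/
lemma paths_finite
    (hnoreturn : ∀ (μ : g.FinPath) (h : 0 < μ.len),
      g.r (μ.edges ⟨0, h⟩) ≠ g.s (μ.edges ⟨μ.len - 1, Nat.sub_lt h Nat.one_pos⟩))
    (Es : Set g.E) (hEs : Es.Finite) :
    {π : g.FinPath | 0 < π.len ∧ ∀ i, π.edges i ∈ Es}.Finite := by
  classical
  haveI := hEs.to_subtype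
  haveI : Finite (Option ↥Es) := Finite.of_equiv _ (Equiv.optionEquivSumPUnit.{0,0} ↥Es).symm
  set N := Nat.card ↥Es with hN
  set P : Set g.FinPath := {π | 0 < π.len ∧ ∀ i, π.edges i ∈ Es} with hP
  have hlenle : ∀ π ∈ P, π.len ≤ N := by
    rintro π ⟨-, hmem⟩
    have hinj : Function.Injective (fun i : Fin π.len => (⟨π.edges i, hmem i⟩ : ↥Es)) := by
      intro a b hab
      exact edges_injective hnoreturn π (congrArg Subtype.val hab)
    calc π.len = Nat.card (Fin π.len) := by
          rw [Nat.card_eq_fintype_card, Fintype.card_fin]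
      _ ≤ Nat.card ↥Es := Nat.card_le_card_of_injective _ hinj
  set Ψ : g.FinPath → (Fin N → Option ↥Es) := fun π i =>
    if h : (i : ℕ) < π.len then
      (if hE : π.edges ⟨i, h⟩ ∈ Es then some ⟨_, hE⟩ else none)
    else none with hΨ
  have hlt : ∀ π₁ ∈ P, ∀ π₂ ∈ P, Ψ π₁ = Ψ π₂ → π₁.len < π₂.len → False := by
    intro π₁ h₁ π₂ h₂ heq hlt
    have hb : π₁.len < N := lt_of_lt_of_le hlt (hlenle π₂ h₂)
    have := congrFun heq ⟨π₁.len, hb⟩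
    simp only [hΨ] at this
    rw [dif_neg (show ¬ (((⟨π₁.len, hb⟩ : Fin N)) : ℕ) < π₁.len from lt_irrefl _),
      dif_pos (show (((⟨π₁.len, hb⟩ : Fin N)) : ℕ) < π₂.len from hlt),
      dif_pos (h₂.2 _)] at this
    exact Option.some_ne_none _ this.symm
  have hinjOn : Set.InjOn Ψ P := by
    intro π₁ h₁ π₂ h₂ heq
    have hlen : π₁.len = π₂.len := by
      rcases lt_trichotomy π₁.len π₂.len with h | h | h
      · exact absurd h (fun h => hlt π₁ h₁ π₂ h₂ heq h)
      · exact h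
      · exact absurd h (fun h => hlt π₂ h₂ π₁ h₁ heq.symm h)
    refine FinPath.ext' hlen ?_
    intro i hi1 hi2
    have hbN : i < N := lt_of_lt_of_le hi1 (hlenle π₁ h₁)
    have := congrFun heq ⟨i, hbN⟩
    simp only [hΨ] at this
    rw [dif_pos (show (((⟨i, hbN⟩ : Fin N)) : ℕ) < π₁.len from hi1),
      dif_pos (show (((⟨i, hbN⟩ : Fin N)) : ℕ) < π₂.len from hi2),
      dif_pos (h₁.2 _), dif_pos (h₂.2 _)] at this
    exact congrArg Subtype.val (Option.some_injective _ this)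
  exact Set.Finite.of_finite_image (Set.toFinite _) hinjOn

end DirGraph

/-- if `E` is a row-finite directed graph with no sources and no return
paths, then the graph groupoid `G_E` has dynamic asymptotic dimension `0`: every open
precompact symmetric subset of `G_E` generates a precompact subgroupoid. -/
theorem stmt_19 (g : DirGraph)
    (hrow : ∀ v : g.V, {e | g.r e = v}.Finite)
    (hnosources : ∀ v : g.V, ∃ e, g.r e = v)
    (hnoreturn : ∀ (μ : g.FinPath) (h : 0 < μ.len),
      g.r (μ.edges ⟨0, h⟩) ≠ g.s (μ.edges ⟨μ.len - 1, by omega⟩))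
    (K : Set g.GraphGroupoid) (hopen : IsOpen K) (hpre : IsCompact (closure K))
    (hsymm : ∀ p ∈ K, g.ginv p ∈ K) :
    IsCompact (closure (g.gen K)) := by
  classical
  -- cover the compact closure of K by finitely many basic sets
  have hcover : closure K ⊆ ⋃ q : {q : g.FinPath × g.FinPath // 0 < q.1.len ∧ 0 < q.2.len},
      g.Z q.val.1 q.val.2 := by
    intro p _
    obtain ⟨μ, ν, hμ, hν, hp⟩ := DirGraph.exists_mem_Z p
    exact Set.mem_iUnion.mpr ⟨⟨(μ, ν), hμ, hν⟩, hp⟩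
  obtain ⟨t, ht⟩ := hpre.elim_finite_subcover
    (fun q : {q : g.FinPath × g.FinPath // 0 < q.1.len ∧ 0 < q.2.len} =>
      g.Z q.val.1 q.val.2)
    (fun q => DirGraph.Z_isOpen q.val.1 q.val.2) hcover
  -- the finite set of edges appearing in the covering paths
  set Es : Set g.E := ⋃ q ∈ t, (Set.range q.val.1.edges ∪ Set.range q.val.2.edges) with hEsdef
  have hEsfin : Es.Finite :=
    t.finite_toSet.biUnion fun q _ => (Set.finite_range _).union (Set.finite_range _)
  -- the finite set of candidate paths
  set P : Set g.FinPath := {π | 0 < π.len ∧ ∀ i, π.edges i ∈ Es} with hPdef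
  have hPfin : P.Finite := DirGraph.paths_finite hnoreturn Es hEsfin
  have hPmem : ∀ π : g.FinPath, 0 < π.len → (∀ i, π.edges i ∈ Es) → π ∈ P :=
    fun π h1 h2 => ⟨h1, h2⟩
  have hPpos : ∀ π ∈ P, 0 < π.len := fun π hπ => hπ.1
  have hPedges : ∀ π ∈ P, ∀ i, π.edges i ∈ Es := fun π hπ => hπ.2
  -- the compact set C
  set C : Set g.GraphGroupoid := ⋃ α ∈ P, ⋃ β ∈ P, g.Z α β with hCdef
  have hCcomp : IsCompact C :=
    hPfin.isCompact_biUnion fun α hα =>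
      hPfin.isCompact_biUnion fun β hβ =>
        DirGraph.Z_isCompact hrow α β (hPpos α hα) (hPpos β hβ)
  have hCclosed : IsClosed C :=
    hPfin.isClosed_biUnion fun α _ =>
      hPfin.isClosed_biUnion fun β _ => DirGraph.Z_isClosed α β
  have hCmem : ∀ (α β : g.FinPath), α ∈ P → β ∈ P → ∀ p ∈ g.Z α β, p ∈ C :=
    fun α β hα hβ p hp =>
      Set.mem_iUnion₂.mpr ⟨α, hα, Set.mem_iUnion₂.mpr ⟨β, hβ, hp⟩⟩
  have hCmem' : ∀ p ∈ C, ∃ α β, α ∈ P ∧ β ∈ P ∧ p ∈ g.Z α β := by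
    intro p hp
    obtain ⟨α, hα, hp'⟩ := Set.mem_iUnion₂.mp hp
    obtain ⟨β, hβ, hp''⟩ := Set.mem_iUnion₂.mp hp'
    exact ⟨α, β, hα, hβ, hp''⟩
  -- paths from the covering family belong to P
  have htP : ∀ q : {q : g.FinPath × g.FinPath // 0 < q.1.len ∧ 0 < q.2.len},
      q ∈ t → q.val.1 ∈ P ∧ q.val.2 ∈ P := by
    intro q hq
    refine ⟨⟨q.property.1, fun i => ?_⟩, ⟨q.property.2, fun i => ?_⟩⟩
    · exact Set.mem_iUnion₂.mpr ⟨q, hq, Or.inl ⟨i, rfl⟩⟩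
    · exact Set.mem_iUnion₂.mpr ⟨q, hq, Or.inr ⟨i, rfl⟩⟩
  have hKC : K ⊆ C := by
    intro p hp
    obtain ⟨q, hqt, hpq⟩ := Set.mem_iUnion₂.mp (ht (subset_closure hp))
    exact hCmem _ _ (htP q hqt).1 (htP q hqt).2 p hpq
  -- C is a subgroupoid
  have hCsub : g.IsSubgroupoid C := by
    constructor
    · intro p hp
      obtain ⟨α, β, hα, hβ, hpZ⟩ := hCmem' p hp
      exact hCmem _ _ hβ hα _ (DirGraph.ginv_mem_Z hpZ)
    · intro p hp q hq hpq
      obtain ⟨α, β, hα, hβ, hpZ⟩ := hCmem' p hp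
      obtain ⟨α', β', hα', hβ', hqZ⟩ := hCmem' q hq
      rcases le_total β.len α'.len with hle | hle
      · obtain ⟨γ, hγpos, hγedges, hmul⟩ :=
          DirGraph.gmul_mem_Z hpZ hqZ hpq hle (hPpos α hα)
        have hγP : γ ∈ P := by
          refine hPmem γ hγpos fun i => ?_
          rcases hγedges i with ⟨j, hj⟩ | ⟨j, hj⟩
          · rw [← hj]; exact hPedges α hα j
          · rw [← hj]; exact hPedges α' hα' j
        exact hCmem _ _ hγP hβ' _ hmul
      · have h' : (g.ginv q).val.2.2 = (g.ginv p).val.1 := hpq.symm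
        obtain ⟨γ, hγpos, hγedges, hmul⟩ :=
          DirGraph.gmul_mem_Z (DirGraph.ginv_mem_Z hqZ) (DirGraph.ginv_mem_Z hpZ) h' hle
            (hPpos β' hβ')
        have hγP : γ ∈ P := by
          refine hPmem γ hγpos fun i => ?_
          rcases hγedges i with ⟨j, hj⟩ | ⟨j, hj⟩
          · rw [← hj]; exact hPedges β' hβ' j
          · rw [← hj]; exact hPedges β hβ j
        have hval : (g.ginv (g.gmul (g.ginv q) (g.ginv p) h')).val
            = (g.gmul p q hpq).val := by
          show (p.val.1, -(-(q.val.2.1) + -(p.val.2.1)), q.val.2.2)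
            = (p.val.1, p.val.2.1 + q.val.2.1, q.val.2.2)
          refine Prod.ext rfl (Prod.ext ?_ rfl)
          show -(-(q.val.2.1) + -(p.val.2.1)) = p.val.2.1 + q.val.2.1
          ring
        have : g.gmul p q hpq ∈ g.Z α γ :=
          DirGraph.mem_Z_of_val_eq hval (DirGraph.ginv_mem_Z hmul)
        exact hCmem _ _ hα hγP _ this
  have hgen : g.gen K ⊆ C := Set.sInter_subset_of_mem ⟨hKC, hCsub⟩
  exact hCcomp.of_isClosed_subset isClosed_closure (closure_minimal hgen hCclosed)
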